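/- arXiv:2002.05964 — 5 statements merged into one kernel-verified Lean document; each statement's English description precedes it below -/
import Mathlib

section
/- Let X be a subshift over alphabet A and let u, v ∈ L(X) be synchronizing words. If w₁, w₂ ∈ L(X) both have u as a prefix and v as a suffix, then w₁ and w₂ have the same set of contexts, i.e. for all t₁, t₂ ∈ L(X), t₁w₁t₂ ∈ L(X) if and only if t₁w₂t₂ ∈ L(X). -/
/-- The shift map on bi-infinite sequences. -/
def shiftMap {A : Type*} (x : ℤ → A) : ℤ → A := fun i => x (i + 1)

/-- The `k`-fold shift map (`σ^k`). -/
def shiftPow {A : Type*} (k : ℤ) (x : ℤ → A) : ℤ → A := fun i => x (i + k)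

/-- A subshift: a closed shift-invariant subset of `A^ℤ`. -/
def IsSubshift {A : Type*} [TopologicalSpace A] (X : Set (ℤ → A)) : Prop :=
  IsClosed X ∧ shiftMap '' X = X

/-- The word `w` occurs in `x` at position `i`. -/
def occursAt {A : Type*} (x : ℤ → A) (w : List A) (i : ℤ) : Prop :=
  ∀ (k : ℕ) (hk : k < w.length), x (i + k) = w.get ⟨k, hk⟩

/-- `w` belongs to the language of `X`. -/
def InLang {A : Type*} (X : Set (ℤ → A)) (w : List A) : Prop :=
  ∃ x ∈ X, occursAt x w 0

/-- The set of contexts of a word with respect to `X`. -/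
def contexts {A : Type*} (X : Set (ℤ → A)) (w : List A) : Set (List A × List A) :=
  {p | InLang X (p.1 ++ w ++ p.2)}

/-- `w` is a synchronizing word of `X`. -/
def IsSynchronizing {A : Type*} (X : Set (ℤ → A)) (w : List A) : Prop :=
  InLang X w ∧ ∀ u v : List A, InLang X (u ++ w) → InLang X (w ++ v) → InLang X (u ++ w ++ v)

/-- `X` is a transitive subshift. -/
def IsTransitiveSubshift {A : Type*} (X : Set (ℤ → A)) : Prop :=
  ∀ u v : List A, InLang X u → InLang X v → ∃ w : List A, InLang X (u ++ w ++ v)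

/-- A reversible cellular automaton (automorphism) of the subshift `X`. -/
def IsAutomorphism {A : Type*} [TopologicalSpace A] (X : Set (ℤ → A))
    (F : (ℤ → A) → (ℤ → A)) : Prop :=
  Set.MapsTo F X X ∧ ContinuousOn F X ∧ (∀ x ∈ X, F (shiftMap x) = shiftMap (F x)) ∧
  ∃ G : (ℤ → A) → (ℤ → A), Set.MapsTo G X X ∧ ContinuousOn G X ∧
    (∀ x ∈ X, G (shiftMap x) = shiftMap (G x)) ∧
    (∀ x ∈ X, G (F x) = x) ∧ (∀ x ∈ X, F (G x) = x)

/-- `F` is given on `X` by a local rule of radius `r`. -/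
def HasRadius {A : Type*} (X : Set (ℤ → A)) (F : (ℤ → A) → (ℤ → A)) (r : ℕ) : Prop :=
  ∃ f : (Fin (2 * r + 1) → A) → A, ∀ x ∈ X, ∀ i : ℤ, F x i = f (fun k => x (i - r + k))

/-- `x` is an equicontinuity point of `(X, F)` (combinatorial formulation). -/
def IsEquicontinuityPoint {A : Type*} (X : Set (ℤ → A)) (F : (ℤ → A) → (ℤ → A))
    (x : ℤ → A) : Prop :=
  x ∈ X ∧ ∀ N : ℕ, ∃ M : ℕ, ∀ y ∈ X, (∀ j : ℤ, |j| ≤ (M : ℤ) → y j = x j) →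
    ∀ t : ℕ, ∀ j : ℤ, |j| ≤ (N : ℤ) → F^[t] y j = F^[t] x j

lemma shiftIter_apply {A : Type*} (n : ℕ) (x : ℤ → A) (i : ℤ) :
    shiftMap^[n] x i = x (i + n) := by
  induction n generalizing x i with
  | zero => simp
  | succ n ih =>
    rw [Function.iterate_succ_apply, ih]
    show x (i + n + 1) = _
    congr 1
    push_cast
    ring

lemma shiftIter_mem {A : Type*} [TopologicalSpace A] {X : Set (ℤ → A)}
    (hX : IsSubshift X) (n : ℕ) {x : ℤ → A} (hx : x ∈ X) : shiftMap^[n] x ∈ X := by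
  induction n with
  | zero => exact hx
  | succ n ih =>
    rw [Function.iterate_succ_apply']
    rw [← hX.2]
    exact ⟨_, ih, rfl⟩

lemma inLang_of_occursAt {A : Type*} [TopologicalSpace A] {X : Set (ℤ → A)}
    (hX : IsSubshift X) {x : ℤ → A} (hx : x ∈ X) (w : List A) (n : ℕ)
    (h : occursAt x w n) : InLang X w := by
  refine ⟨shiftMap^[n] x, shiftIter_mem hX n hx, fun k hk => ?_⟩
  rw [shiftIter_apply]
  have := h k hk
  rw [← this]
  congr 1
  ring

lemma occursAt_append_left {A : Type*} {x : ℤ → A} {a b : List A} {i : ℤ}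
    (h : occursAt x (a ++ b) i) : occursAt x a i := by
  intro k hk
  have hk' : k < (a ++ b).length := by simp; omega
  have := h k hk'
  simp only [List.get_eq_getElem] at this ⊢
  rwa [List.getElem_append_left hk] at this

lemma occursAt_append_right {A : Type*} {x : ℤ → A} {a b : List A} {i : ℤ}
    (h : occursAt x (a ++ b) i) : occursAt x b (i + a.length) := by
  intro k hk
  have hk' : a.length + k < (a ++ b).length := by simp; omega
  have := h (a.length + k) hk'
  rw [show (i + ↑a.length + ↑k : ℤ) = i + ↑(a.length + k) by push_cast; ring]
  rw [this]
  simp [List.get_eq_getElem, List.getElem_append_right (Nat.le_add_right _ _)]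

lemma inLang_of_infix {A : Type*} [TopologicalSpace A] {X : Set (ℤ → A)}
    (hX : IsSubshift X) {s w : List A} (h : InLang X s) (hw : w <:+: s) :
    InLang X w := by
  obtain ⟨p, q, rfl⟩ := hw
  obtain ⟨x, hx, hocc⟩ := h
  have h1 : occursAt x (w ++ q) (0 + p.length) :=
    occursAt_append_right (by rwa [List.append_assoc] at hocc)
  have h2 : occursAt x w (0 + p.length) := occursAt_append_left h1
  exact inLang_of_occursAt hX hx w p.length (by rwa [zero_add] at h2)

lemma stmt0_aux {A : Type*} [TopologicalSpace A]
    (X : Set (ℤ → A)) (hX : IsSubshift X)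
    (u v : List A) (hu : IsSynchronizing X u) (hv : IsSynchronizing X v)
    (w₁ w₂ : List A) (hw₂ : InLang X w₂)
    (hu₁ : u <+: w₁) (hu₂ : u <+: w₂) (hv₁ : v <:+ w₁) (hv₂ : v <:+ w₂) :
    ∀ t₁ t₂ : List A, InLang X (t₁ ++ w₁ ++ t₂) → InLang X (t₁ ++ w₂ ++ t₂) := by
  intro t₁ t₂ h
  obtain ⟨r, hr⟩ := hu₁
  obtain ⟨m, hm⟩ := hu₂
  obtain ⟨p, hp⟩ := hv₂
  obtain ⟨q, hq⟩ := hv₁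
  -- t₁ ++ u is an infix of t₁ ++ w₁ ++ t₂
  have h1 : InLang X (t₁ ++ u) := by
    refine inLang_of_infix hX h ⟨[], r ++ t₂, ?_⟩
    simp [← hr, List.append_assoc]
  -- v ++ t₂ is an infix of t₁ ++ w₁ ++ t₂
  have h2 : InLang X (v ++ t₂) := by
    refine inLang_of_infix hX h ⟨t₁ ++ q, [], ?_⟩
    simp [← hq, List.append_assoc]
  -- use synchronizing u to get t₁ ++ w₂
  have h3 : InLang X (t₁ ++ w₂) := by
    have := hu.2 t₁ m h1 (by rwa [hm])
    rwa [List.append_assoc, hm] at this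
  -- use synchronizing v to get t₁ ++ w₂ ++ t₂
  have h4 := hv.2 (t₁ ++ p) t₂ (by rwa [List.append_assoc, hp]) h2
  simp only [← hp, ← List.append_assoc] at h4 ⊢
  exact h4

/-- If `u, v` are synchronizing words of a subshift `X` and `w₁, w₂ ∈ L(X)`
both have `u` as a prefix and `v` as a suffix, then `w₁` and `w₂` have the same contexts. -/
theorem stmt0 {A : Type*} [TopologicalSpace A] [DiscreteTopology A]
    (X : Set (ℤ → A)) (hX : IsSubshift X)
    (u v : List A) (hu : IsSynchronizing X u) (hv : IsSynchronizing X v)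
    (w₁ w₂ : List A) (hw₁ : InLang X w₁) (hw₂ : InLang X w₂)
    (hu₁ : u <+: w₁) (hu₂ : u <+: w₂) (hv₁ : v <:+ w₁) (hv₂ : v <:+ w₂) :
    ∀ t₁ t₂ : List A, InLang X (t₁ ++ w₁ ++ t₂) ↔ InLang X (t₁ ++ w₂ ++ t₂) := by
  intro t₁ t₂
  exact ⟨stmt0_aux X hX u v hu hv w₁ w₂ hw₂ hu₁ hu₂ hv₁ hv₂ t₁ t₂,
    stmt0_aux X hX u v hu hv w₂ w₁ hw₁ hu₂ hu₁ hv₂ hv₁ t₁ t₂⟩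
end

section
/- Let X ⊆ A^ℤ be a subshift, A' a primed copy of A, ψ: X → X' a conjugacy as in the priming lemma (for each position ψ either keeps the symbol or replaces a by a'), and w = w₁⋯wₙ ∈ L(X) ∩ L(X') with all wᵢ ∈ A. Suppose wᵢw'_{i+1} ∉ L(X') and w'ᵢw_{i+1} ∉ L(X') for 1 ≤ i < n. If w is future deterministic in X, then w is future deterministic in X'. -/
/-- Transfer of future determinism along a priming conjugacy: if
`wᵢ w'_{i+1} ∉ L(X')` and `w'ᵢ w_{i+1} ∉ L(X')` for `1 ≤ i < n`, and `w` is future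
deterministic in `X`, then `w` is future deterministic in `X' = ψ(X)`. -/
theorem stmt5 {A : Type*} [TopologicalSpace A] [DiscreteTopology A]
    (X : Set (ℤ → A)) (hX : IsSubshift X)
    (ψ : (ℤ → A) → (ℤ → A ⊕ A))
    (hcont : ContinuousOn ψ X)
    (hcomm : ∀ x ∈ X, ψ (shiftMap x) = shiftMap (ψ x))
    (hinj : Set.InjOn ψ X)
    (hprime : ∀ x ∈ X, ∀ i : ℤ, ψ x i = Sum.inl (x i) ∨ ψ x i = Sum.inr (x i))
    (w : List A) (hnodup : w.Nodup)
    (hwX : InLang X w) (hwX' : InLang (ψ '' X) (w.map Sum.inl))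
    (hno : ∀ (i : ℕ) (hi : i + 1 < w.length),
      ¬ InLang (ψ '' X) [Sum.inl (w.get ⟨i, by omega⟩), Sum.inr (w.get ⟨i + 1, hi⟩)] ∧
      ¬ InLang (ψ '' X) [Sum.inr (w.get ⟨i, by omega⟩), Sum.inl (w.get ⟨i + 1, hi⟩)])
    (hfd : ∀ (i : ℕ) (hi : i + 1 < w.length), ∀ a : A,
      InLang X [w.get ⟨i, by omega⟩, a] → a = w.get ⟨i + 1, hi⟩) :
    ∀ (i : ℕ) (hi : i + 1 < w.length), ∀ b : A ⊕ A,
      InLang (ψ '' X) [Sum.inl (w.get ⟨i, by omega⟩), b] → b = Sum.inl (w.get ⟨i + 1, hi⟩) := by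
  intro i hi b hb
  obtain ⟨y, ⟨x, hxX, rfl⟩, hocc⟩ := hb
  have h0 : ψ x 0 = Sum.inl (w.get ⟨i, by omega⟩) := by
    have := hocc 0 (by simp); simpa using this
  have h1 : ψ x 1 = b := by
    have := hocc 1 (by simp); simpa using this
  have hx0 : x 0 = w.get ⟨i, by omega⟩ := by
    rcases hprime x hxX 0 with h | h
    · rw [h] at h0; exact Sum.inl.injEq _ _ ▸ (by injection h0)
    · rw [h] at h0; exact absurd h0 (by simp)
  have hxlang : InLang X [w.get ⟨i, by omega⟩, x 1] := by
    refine ⟨x, hxX, ?_⟩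
    intro k hk
    simp only [List.length_cons, List.length_nil] at hk
    interval_cases k <;> simp [hx0]
  have hx1 : x 1 = w.get ⟨i + 1, hi⟩ := hfd i hi (x 1) hxlang
  rcases hprime x hxX 1 with h | h
  · rw [h, hx1] at h1; exact h1.symm
  · exfalso
    apply (hno i hi).1
    refine ⟨ψ x, ⟨x, hxX, rfl⟩, ?_⟩
    intro k hk
    simp only [List.length_cons, List.length_nil] at hk
    interval_cases k
    · simpa using h0
    · have e : (0:ℤ)+(1:ℕ)=1 := by norm_num
      rw [e, h, hx1]; rfl
end

section
/- Let X ⊆ A^ℤ be a subshift, w = w₁⋯wₙ ∈ L(X) a synchronizing word, and ψ: X → X' a priming conjugacy (ψ(x)[i] ∈ {x[i], x[i]'}) such that w ∈ L(X'), ψ is blocking at w (for x, y ∈ X with w occurring at position 0: equality of right tails x[0,∞] = y[0,∞] implies ψ(x)[n,∞] = ψ(y)[n,∞], and equality of left tails x[−∞,n−1] = y[−∞,n−1] implies ψ(x)[−∞,−1] = ψ(y)[−∞,−1]), and the priming of w is determined from the right (x[0,∞] = y[0,∞] implies ψ(x)[0,n−1] = ψ(y)[0,n−1]) or from the left. Then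 w is a synchronizing word for X' = ψ(X). -/
/-- The gluing of `x` and `y` at the origin. -/
def glue {A : Type*} (x y : ℤ → A) : ℤ → A := fun i => if i < 0 then x i else y i

/-- If `w` is a synchronizing word of `X` and the priming conjugacy `ψ`
is blocking at `w`, with the priming of `w` determined from the right or from the left,
then `w` (primed via `Sum.inl`) is a synchronizing word of `X' = ψ(X)`
(in the configuration/gluing formulation). -/
theorem stmt6 {A : Type*} [TopologicalSpace A] [DiscreteTopology A]
    (X : Set (ℤ → A)) (hX : IsSubshift X)
    (ψ : (ℤ → A) → (ℤ → A ⊕ A))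
    (hcont : ContinuousOn ψ X)
    (hcomm : ∀ x ∈ X, ψ (shiftMap x) = shiftMap (ψ x))
    (hinj : Set.InjOn ψ X)
    (hprime : ∀ x ∈ X, ∀ i : ℤ, ψ x i = Sum.inl (x i) ∨ ψ x i = Sum.inr (x i))
    (w : List A)
    (hsyncX : InLang X w ∧ ∀ x ∈ X, ∀ y ∈ X,
      occursAt x w 0 → occursAt y w 0 → glue x y ∈ X)
    (hwX' : InLang (ψ '' X) (w.map Sum.inl))
    (hblock : ∀ x ∈ X, ∀ y ∈ X, occursAt x w 0 → occursAt y w 0 →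
      ((∀ i : ℤ, 0 ≤ i → x i = y i) →
        ∀ i : ℤ, (w.length : ℤ) ≤ i → ψ x i = ψ y i) ∧
      ((∀ i : ℤ, i < (w.length : ℤ) → x i = y i) →
        ∀ i : ℤ, i < 0 → ψ x i = ψ y i))
    (hdet :
      (∀ x ∈ X, ∀ y ∈ X, occursAt x w 0 → occursAt y w 0 →
        (∀ i : ℤ, 0 ≤ i → x i = y i) →
        ∀ i : ℤ, 0 ≤ i → i < (w.length : ℤ) → ψ x i = ψ y i) ∨
      (∀ x ∈ X, ∀ y ∈ X, occursAt x w 0 → occursAt y w 0 →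
        (∀ i : ℤ, i < (w.length : ℤ) → x i = y i) →
        ∀ i : ℤ, 0 ≤ i → i < (w.length : ℤ) → ψ x i = ψ y i)) :
    ∀ x' ∈ ψ '' X, ∀ y' ∈ ψ '' X,
      occursAt x' (w.map Sum.inl) 0 → occursAt y' (w.map Sum.inl) 0 →
      glue x' y' ∈ ψ '' X := by
  rintro x' ⟨x, hxX, rfl⟩ y' ⟨y, hyX, rfl⟩ hx' hy'
  -- occurrence of w in x and y
  have unprime : ∀ z ∈ X, occursAt (ψ z) (w.map Sum.inl) 0 → occursAt z w 0 := by
    intro z hz hocc k hk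
    have hk' : k < (w.map (Sum.inl : A → A ⊕ A)).length := by simpa using hk
    have h1 := hocc k hk'
    have h2 := hprime z hz ((0 : ℤ) + k)
    simp only [List.get_eq_getElem, List.getElem_map] at h1
    rcases h2 with h2 | h2
    · rw [h2] at h1; exact Sum.inl.inj h1
    · rw [h2] at h1; exact absurd h1 (by simp)
  have hxw : occursAt x w 0 := unprime x hxX hx'
  have hyw : occursAt y w 0 := unprime y hyX hy'
  set z := glue x y with hzdef
  have hzX : z ∈ X := hsyncX.2 x hxX y hyX hxw hyw
  have hzy : ∀ i : ℤ, 0 ≤ i → z i = y i := by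
    intro i hi
    simp [hzdef, glue, not_lt.mpr hi]
  have hzw : occursAt z w 0 := by
    intro k hk
    rw [hzy ((0:ℤ)+k) (by positivity)]
    exact hyw k hk
  have hzx : ∀ i : ℤ, i < (w.length : ℤ) → z i = x i := by
    intro i hi
    rcases lt_or_ge i 0 with h | h
    · simp [hzdef, glue, h]
    · rw [hzy i h]
      obtain ⟨k, rfl⟩ := Int.eq_ofNat_of_zero_le h
      have hk : k < w.length := by exact_mod_cast hi
      have h1 := hyw k hk
      have h2 := hxw k hk
      simp only [zero_add] at h1 h2
      rw [h1, h2]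
  refine ⟨z, hzX, ?_⟩
  funext i
  rcases lt_or_ge i 0 with hi | hi
  · have := (hblock x hxX z hzX hxw hzw).2 (fun j hj => (hzx j hj).symm) i hi
    simp [glue, hi, this.symm]
  · simp only [glue, if_neg (not_lt.mpr hi)]
    rcases lt_or_ge i (w.length : ℤ) with hin | hin
    · -- middle region: both sides are inl of the letter of w
      obtain ⟨k, rfl⟩ := Int.eq_ofNat_of_zero_le hi
      have hk : k < w.length := by exact_mod_cast hin
      have hk' : k < (w.map (Sum.inl : A → A ⊕ A)).length := by simpa using hk
      have hy1 : ψ y (k : ℤ) = Sum.inl (w.get ⟨k, hk⟩) := by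
        have := hy' k hk'
        simpa using this
      rcases hdet with hdet | hdet
      · have := hdet z hzX y hyX hzw hyw hzy (k : ℤ) hi hin
        rw [this, hy1]
      · have := hdet z hzX x hxX hzw hxw hzx (k : ℤ) hi hin
        rw [this]
        have hx1 : ψ x (k : ℤ) = Sum.inl (w.get ⟨k, hk⟩) := by
          have := hx' k hk'
          simpa using this
        rw [hx1, hy1]
    · exact ((hblock y hyX z hzX hyw hzw).1 (fun j hj => (hzy j hj).symm) i hin).symm
end

section
/- Let X be a transitive subshift and F: X → X a radius-r cellular automaton. If F has a blocking word, then F is almost equicontinuous (there exists a point of equicontinuity for F). -/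
section Aux

variable {A : Type*}

lemma shiftMap_mem {X : Set (ℤ → A)} [TopologicalSpace A] (hX : IsSubshift X)
    {x : ℤ → A} (hx : x ∈ X) : shiftMap x ∈ X := by
  rw [← hX.2]; exact Set.mem_image_of_mem _ hx

lemma shiftPow_mem {X : Set (ℤ → A)} [TopologicalSpace A] (hX : IsSubshift X)
    (k : ℤ) {x : ℤ → A} (hx : x ∈ X) : shiftPow k x ∈ X := by
  induction k using Int.induction_on with
  | zero =>
    have : shiftPow 0 x = x := by funext i; simp [shiftPow]
    rwa [this]
  | succ k ih =>
    have : shiftPow ((k : ℤ) + 1) x = shiftMap (shiftPow k x) := by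
      funext i; simp only [shiftPow, shiftMap]; congr 1; ring
    rw [this]; exact shiftMap_mem hX ih
  | pred k ih =>
    have h1 : shiftPow (-(k : ℤ)) x ∈ shiftMap '' X := by rw [hX.2]; exact ih
    obtain ⟨z, hz, hze⟩ := h1
    have : shiftPow (-(k : ℤ) - 1) x = z := by
      funext i
      have := congrFun hze (i - 1)
      simp only [shiftMap, shiftPow] at this ⊢
      rw [show i - 1 + 1 = i by ring] at this
      rw [this]; congr 1; ring
    rw [this]; exact hz

lemma F_shiftPow {X : Set (ℤ → A)} [TopologicalSpace A] {F : (ℤ → A) → (ℤ → A)} {r : ℕ}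
    (hX : IsSubshift X) (hrad : HasRadius X F r) (k : ℤ) {x : ℤ → A} (hx : x ∈ X) :
    F (shiftPow k x) = shiftPow k (F x) := by
  obtain ⟨f, hf⟩ := hrad
  funext i
  rw [show shiftPow k (F x) i = F x (i + k) from rfl, hf x hx,
     hf _ (shiftPow_mem hX k hx)]
  congr 1; funext j; show x (i - ↑r + ↑j + k) = x (i + k - ↑r + ↑j); congr 1; ring

lemma iter_mem {X : Set (ℤ → A)} {F : (ℤ → A) → (ℤ → A)}
    (hmaps : Set.MapsTo F X X) (t : ℕ) {x : ℤ → A} (hx : x ∈ X) : F^[t] x ∈ X :=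
  hmaps.iterate t hx

lemma iter_shiftPow {X : Set (ℤ → A)} [TopologicalSpace A] {F : (ℤ → A) → (ℤ → A)} {r : ℕ}
    (hX : IsSubshift X) (hmaps : Set.MapsTo F X X) (hrad : HasRadius X F r)
    (k : ℤ) (t : ℕ) {x : ℤ → A} (hx : x ∈ X) :
    F^[t] (shiftPow k x) = shiftPow k (F^[t] x) := by
  induction t with
  | zero => simp
  | succ t ih =>
    rw [Function.iterate_succ_apply', Function.iterate_succ_apply', ih,
      F_shiftPow hX hrad k (iter_mem hmaps t hx)]

lemma occursAt_append_left_s9 {y : ℤ → A} {u v : List A} {i : ℤ}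
    (h : occursAt y (u ++ v) i) : occursAt y u i := by
  intro k hk
  have h2 := h k (by rw [List.length_append]; omega)
  rw [h2]
  simp only [List.get_eq_getElem]
  exact List.getElem_append_left hk

lemma occursAt_append_right_s9 {y : ℤ → A} {u v : List A} {i : ℤ}
    (h : occursAt y (u ++ v) i) : occursAt y v (i + u.length) := by
  intro k hk
  have h2 := h (u.length + k) (by rw [List.length_append]; omega)
  simp only [List.get_eq_getElem] at h2 ⊢
  rw [show i + ↑u.length + ↑k = i + ↑(u.length + k) by push_cast; ring, h2]
  rw [List.getElem_append_right (by omega)]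
  congr 1; omega

end Aux
section Aux2

variable {A : Type*} [TopologicalSpace A]

omit [TopologicalSpace A] in
lemma occursAt_of_agree {x y : ℤ → A} {w : List A} {a : ℤ}
    (hxa : occursAt x w a) {lo hi : ℤ} (hlo : lo ≤ a) (hhi : a + w.length ≤ hi)
    (hagree : ∀ j : ℤ, lo ≤ j → j < hi → y j = x j) : occursAt y w a := by
  intro k hk
  rw [hagree (a + k) (by omega) (by omega)]
  exact hxa k hk

lemma block_at {X : Set (ℤ → A)} {F : (ℤ → A) → (ℤ → A)} {r : ℕ} {w : List A} {e p : ℕ}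
    (hX : IsSubshift X) (hmaps : Set.MapsTo F X X) (hrad : HasRadius X F r)
    (hb : ∀ x ∈ X, ∀ y ∈ X, occursAt x w 0 → occursAt y w 0 →
      ∀ t : ℕ, ∀ j : ℤ, (p : ℤ) ≤ j → j < (p : ℤ) + e → F^[t] x j = F^[t] y j)
    {x y : ℤ → A} (hx : x ∈ X) (hy : y ∈ X) {c : ℤ}
    (hxc : occursAt x w c) (hyc : occursAt y w c)
    (t : ℕ) (j : ℤ) (h1 : c + p ≤ j) (h2 : j < c + p + e) :
    F^[t] x j = F^[t] y j := by
  have hxs : occursAt (shiftPow c x) w 0 := by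
    intro k hk
    show x (0 + ↑k + c) = _
    rw [show (0 : ℤ) + ↑k + c = c + k by ring]; exact hxc k hk
  have hys : occursAt (shiftPow c y) w 0 := by
    intro k hk
    show y (0 + ↑k + c) = _
    rw [show (0 : ℤ) + ↑k + c = c + k by ring]; exact hyc k hk
  have h := hb _ (shiftPow_mem hX c hx) _ (shiftPow_mem hX c hy) hxs hys t (j - c)
    (by omega) (by omega)
  rw [iter_shiftPow hX hmaps hrad c t hx, iter_shiftPow hX hmaps hrad c t hy] at h
  simpa [shiftPow, sub_add_cancel] using h

lemma propagate {X : Set (ℤ → A)} {F : (ℤ → A) → (ℤ → A)} {r : ℕ} {w : List A} {e p : ℕ}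
    (hX : IsSubshift X) (hmaps : Set.MapsTo F X X) (hrad : HasRadius X F r)
    (hep : p + e ≤ w.length) (hre : r + 1 ≤ e)
    (hb : ∀ x ∈ X, ∀ y ∈ X, occursAt x w 0 → occursAt y w 0 →
      ∀ t : ℕ, ∀ j : ℤ, (p : ℤ) ≤ j → j < (p : ℤ) + e → F^[t] x j = F^[t] y j)
    {x y : ℤ → A} (hx : x ∈ X) (hy : y ∈ X) {a b : ℤ} (hab : a ≤ b)
    (hxa : occursAt x w a) (hxb : occursAt x w b)
    (hagree : ∀ j : ℤ, a ≤ j → j < b + w.length → y j = x j) :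
    ∀ t : ℕ, ∀ j : ℤ, a + p ≤ j → j < b + p + e → F^[t] x j = F^[t] y j := by
  have hya : occursAt y w a := occursAt_of_agree hxa le_rfl (by omega) hagree
  have hyb : occursAt y w b := occursAt_of_agree hxb hab le_rfl hagree
  obtain ⟨f, hf⟩ := hrad
  intro t
  induction t with
  | zero =>
    intro j h1 h2
    simp only [Function.iterate_zero, id_eq]
    exact (hagree j (by omega) (by omega)).symm
  | succ t ih =>
    intro j h1 h2
    rcases lt_or_ge j (a + p + e) with hj | hj
    · exact block_at hX hmaps ⟨f, hf⟩ hb hx hy hxa hya (t + 1) j h1 hj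
    rcases le_or_gt (b + p) j with hj2 | hj2
    · exact block_at hX hmaps ⟨f, hf⟩ hb hx hy hxb hyb (t + 1) j hj2 h2
    rw [Function.iterate_succ_apply', Function.iterate_succ_apply',
      hf _ (iter_mem hmaps t hx), hf _ (iter_mem hmaps t hy)]
    congr 1
    funext k
    have hk : (k : ℤ) ≤ 2 * r := by omega
    exact ih (j - r + k) (by omega) (by omega)
end Aux2
/-- Auxiliary: a point of `X` with two marked occurrences of `w`. -/
structure Anchor {A : Type*} (X : Set (ℤ → A)) (w : List A) where
  z : ℤ → A
  a : ℤ
  b : ℤ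
  hz : z ∈ X
  hab : a ≤ b
  ha : occursAt z w a
  hb : occursAt z w b

lemma occursAt_shiftPow {A : Type*} {y : ℤ → A} {v : List A} {q : ℤ}
    (h : occursAt y v q) (d : ℤ) : occursAt (shiftPow d y) v (q - d) := by
  intro k hk
  show y (q - d + ↑k + d) = _
  rw [show q - d + ↑k + d = q + k by ring]
  exact h k hk

section Aux3

variable {A : Type*} [TopologicalSpace A]

lemma anchor_step {X : Set (ℤ → A)} {w : List A}
    (hX : IsSubshift X) (htrans : IsTransitiveSubshift X)
    (hw : InLang X w) (hwlen : 1 ≤ w.length) (T : Anchor X w) :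
    ∃ T' : Anchor X w, T'.a ≤ T.a - 1 ∧ T.b + 1 ≤ T'.b ∧
      ∀ j : ℤ, T.a ≤ j → j < T.b + w.length → T'.z j = T.z j := by
  obtain ⟨z, a, b, hz, hab, ha, hb⟩ := T
  set L : ℕ := (b + w.length - a).toNat with hL
  have hLcast : (L : ℤ) = b + w.length - a := by
    rw [hL, Int.toNat_of_nonneg (by omega)]
  set W : List A := List.ofFn (fun k : Fin L => z (a + k)) with hW
  have hWlen : W.length = L := by simp [hW]
  have hWk : ∀ k : ℕ, ∀ hk : k < W.length, W.get ⟨k, hk⟩ = z (a + k) := by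
    intro k hk
    simp [hW, List.get_eq_getElem, List.getElem_ofFn]
  have hWlang : InLang X W := by
    refine ⟨shiftPow a z, shiftPow_mem hX a hz, ?_⟩
    intro k hk
    show z (0 + ↑k + a) = _
    rw [hWk k hk, show (0 : ℤ) + ↑k + a = a + k by ring]
  obtain ⟨s, hs⟩ := htrans w W hw hWlang
  obtain ⟨u, hu⟩ := htrans (w ++ s ++ W) w hs hw
  obtain ⟨y, hy, hyo⟩ := hu
  have hyo' : occursAt y (w ++ (s ++ (W ++ (u ++ w)))) 0 := by
    simpa [List.append_assoc] using hyo
  -- extract occurrences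
  have o1 : occursAt y w 0 := occursAt_append_left_s9 hyo'
  have o2 := occursAt_append_right_s9 hyo'
  have o3 := occursAt_append_right_s9 o2
  have o4 : occursAt y W (0 + ↑w.length + ↑s.length) := occursAt_append_left_s9 o3
  have o5 := occursAt_append_right_s9 o3
  have o6 := occursAt_append_right_s9 o5
  -- shift so that the copy of W sits at position a
  set d : ℤ := 0 + ↑w.length + ↑s.length - a with hd
  set z' : ℤ → A := shiftPow d y with hz'
  have hz'mem : z' ∈ X := shiftPow_mem hX d hy
  have hWat : occursAt z' W a := by
    have := occursAt_shiftPow o4 d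
    rwa [show 0 + (w.length : ℤ) + ↑s.length - d = a by rw [hd]; ring] at this
  have hagree : ∀ j : ℤ, a ≤ j → j < b + w.length → z' j = z j := by
    intro j h1 h2
    have hk : (j - a).toNat < W.length := by rw [hWlen]; omega
    have := hWat (j - a).toNat hk
    rw [hWk _ hk] at this
    rw [show a + ((j - a).toNat : ℤ) = j by omega] at this
    exact this
  have hwa' : occursAt z' w (0 - d) := occursAt_shiftPow o1 d
  have hwb' : occursAt z' w (0 + ↑w.length + ↑s.length + ↑W.length + ↑u.length - d) :=
    occursAt_shiftPow o6 d
  have hb'eq : 0 + (w.length : ℤ) + ↑s.length + ↑W.length + ↑u.length - d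
      = b + w.length + u.length := by
    rw [hd, hWlen, hLcast]; ring
  refine ⟨⟨z', 0 - d, b + ↑w.length + ↑u.length, hz'mem, by omega, hwa', by rwa [hb'eq] at hwb'⟩,
    by simp only; omega, by simp only; omega, hagree⟩

end Aux3
/-- On a transitive subshift, a radius-`r` CA admitting a blocking word is
almost equicontinuous: it has an equicontinuity point. -/
theorem stmt9 {A : Type*} [Finite A] [TopologicalSpace A] [DiscreteTopology A]
    (X : Set (ℤ → A)) (hX : IsSubshift X) (htrans : IsTransitiveSubshift X)
    (F : (ℤ → A) → (ℤ → A)) (r : ℕ)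
    (hmaps : Set.MapsTo F X X) (hrad : HasRadius X F r)
    (w : List A) (hw : InLang X w)
    (hblock : ∃ e p : ℕ, e ≤ w.length ∧ r + 1 ≤ e ∧ p + e ≤ w.length ∧
      ∀ x ∈ X, ∀ y ∈ X, occursAt x w 0 → occursAt y w 0 →
        ∀ t : ℕ, ∀ j : ℤ, (p : ℤ) ≤ j → j < (p : ℤ) + e → F^[t] x j = F^[t] y j) :
    ∃ x, IsEquicontinuityPoint X F x := by
  classical
  obtain ⟨e, p, hew, hre, hep, hb⟩ := hblock
  have hwlen : 1 ≤ w.length := by omega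
  obtain ⟨z0, hz0, ho0⟩ := hw
  have hw' : InLang X w := ⟨z0, hz0, ho0⟩
  choose next h1 h2 h3 using anchor_step hX htrans hw' hwlen
  set g : ℕ → Anchor X w := fun n => next^[n] ⟨z0, 0, 0, hz0, le_rfl, ho0, ho0⟩ with hg
  have hgsucc : ∀ n, g (n + 1) = next (g n) := by
    intro n; simp only [hg, Function.iterate_succ_apply']
  have hga : ∀ n : ℕ, (g n).a ≤ -(n : ℤ) := by
    intro n
    induction n with
    | zero => simp [hg]
    | succ n ih =>
      have := h1 (g n)
      rw [← hgsucc n] at this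
      push_cast
      omega
  have hgb : ∀ n : ℕ, (n : ℤ) ≤ (g n).b := by
    intro n
    induction n with
    | zero => simp [hg]
    | succ n ih =>
      have := h2 (g n)
      rw [← hgsucc n] at this
      push_cast
      omega
  have hamono : ∀ m n : ℕ, m ≤ n → (g n).a ≤ (g m).a := by
    intro m n hmn
    induction n, hmn using Nat.le_induction with
    | base => exact le_rfl
    | succ n hmn ih =>
      have := h1 (g n)
      rw [← hgsucc n] at this
      omega
  have hbmono : ∀ m n : ℕ, m ≤ n → (g m).b ≤ (g n).b := by
    intro m n hmn
    induction n, hmn using Nat.le_induction with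
    | base => exact le_rfl
    | succ n hmn ih =>
      have := h2 (g n)
      rw [← hgsucc n] at this
      omega
  have hagree : ∀ m n : ℕ, m ≤ n → ∀ j : ℤ, (g m).a ≤ j → j < (g m).b + w.length →
      (g n).z j = (g m).z j := by
    intro m n hmn
    induction n, hmn using Nat.le_induction with
    | base => intro j _ _; rfl
    | succ n hmn ih =>
      intro j hj1 hj2
      have hstep := h3 (g n) j (le_trans (hamono m n hmn) hj1)
        (lt_of_lt_of_le hj2 (by have := hbmono m n hmn; omega))
      rw [← hgsucc n] at hstep
      rw [hstep, ih j hj1 hj2]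
  set D : ℕ → Set (ℤ → A) := fun n =>
    X ∩ ⋂ j : ℤ, {x | (g n).a ≤ j → j < (g n).b + w.length → x j = (g n).z j} with hD
  have hDsub : ∀ n, D (n + 1) ⊆ D n := by
    intro n x hx
    refine ⟨hx.1, ?_⟩
    rw [Set.mem_iInter]
    intro j
    intro hj1 hj2
    have hx2 := Set.mem_iInter.mp hx.2 j
    have hj1' : (g (n + 1)).a ≤ j := le_trans (hamono n (n + 1) (by omega)) hj1
    have hj2' : j < (g (n + 1)).b + w.length := by
      have := hbmono n (n + 1) (by omega); omega
    rw [hx2 hj1' hj2', hagree n (n + 1) (by omega) j hj1 hj2]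
  have hDne : ∀ n, (D n).Nonempty := by
    intro n
    refine ⟨(g n).z, (g n).hz, ?_⟩
    rw [Set.mem_iInter]
    intro j _ _
    rfl
  have hDclosed : ∀ n, IsClosed (D n) := by
    intro n
    refine hX.1.inter (isClosed_iInter fun j => ?_)
    by_cases hj1 : (g n).a ≤ j
    · by_cases hj2 : j < (g n).b + w.length
      · have : {x : ℤ → A | (g n).a ≤ j → j < (g n).b + w.length → x j = (g n).z j}
            = {x : ℤ → A | x j = (g n).z j} := by
          ext x; simp [hj1, hj2]
        rw [this]
        exact isClosed_eq (continuous_apply j) continuous_const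
      · have : {x : ℤ → A | (g n).a ≤ j → j < (g n).b + w.length → x j = (g n).z j}
            = Set.univ := by
          ext x; simp [hj2]
        rw [this]; exact isClosed_univ
    · have : {x : ℤ → A | (g n).a ≤ j → j < (g n).b + w.length → x j = (g n).z j}
          = Set.univ := by
        ext x; simp [hj1]
      rw [this]; exact isClosed_univ
  obtain ⟨x, hxmem⟩ := IsCompact.nonempty_iInter_of_sequence_nonempty_isCompact_isClosed
    D hDsub hDne ((hDclosed 0).isCompact) hDclosed
  have hxD : ∀ n, x ∈ D n := fun n => Set.mem_iInter.mp hxmem n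
  have hxX : x ∈ X := (hxD 0).1
  have hxagree : ∀ n : ℕ, ∀ j : ℤ, (g n).a ≤ j → j < (g n).b + w.length →
      x j = (g n).z j := by
    intro n j hj1 hj2
    exact Set.mem_iInter.mp (hxD n).2 j hj1 hj2
  have hxa : ∀ n, occursAt x w (g n).a := by
    intro n
    exact occursAt_of_agree (g n).ha le_rfl (by have := (g n).hab; omega)
      (fun j hj1 hj2 => hxagree n j hj1 hj2)
  have hxb : ∀ n, occursAt x w (g n).b := by
    intro n
    exact occursAt_of_agree (g n).hb (g n).hab le_rfl
      (fun j hj1 hj2 => hxagree n j hj1 hj2)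
  refine ⟨x, hxX, ?_⟩
  intro N
  set n : ℕ := N + p with hn
  set a : ℤ := (g n).a with ha
  set b : ℤ := (g n).b with hbdef
  have hnz : (n : ℤ) = N + p := by rw [hn]; push_cast; ring
  have haN : a + p ≤ -(N : ℤ) := by have := hga n; omega
  have hbN : (N : ℤ) < b + p + e := by have := hgb n; omega
  refine ⟨(max (-a) (b + w.length)).toNat, ?_⟩
  intro y hy hyagree t j hj
  have hM : ((max (-a) (b + w.length)).toNat : ℤ) = max (-a) (b + w.length) := by
    have hb0 : (0 : ℤ) ≤ b := le_trans (by positivity) (hgb n)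
    rw [Int.toNat_of_nonneg (le_trans (by omega) (le_max_right _ _))]
  have hyx : ∀ j : ℤ, a ≤ j → j < b + w.length → y j = x j := by
    intro j hj1 hj2
    refine hyagree j ?_
    rw [hM]
    rw [abs_le]
    constructor
    · calc -(max (-a) (b + ↑w.length)) ≤ -(-a) := by
            exact neg_le_neg (le_max_left _ _)
      _ = a := by ring
      _ ≤ j := hj1
    · exact le_trans (by omega) (le_max_right _ _)
  rw [abs_le] at hj
  exact (propagate hX hmaps hrad hep hre hb hxX hy (g n).hab (hxa n) (hxb n) hyx t j
    (by omega) (by omega)).symm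
end

section
/- Let S ⊆ ℕ be nonempty and let X_S be the S-gap shift. If S is infinite and not eventually periodic (so X_S is not sofic), then every automorphism F ∈ Aut(X_S) fixes the point 1^ℤ: F(1^ℤ) = 1^ℤ. -/
/-- The generating word `0 1^n` of an `S`-gap shift. -/
def genWord (n : ℕ) : List Bool := false :: List.replicate n true

/-- `w` is a concatenation of generating words `0 1^n`, `n ∈ S`. -/
def InGenStar (S : Set ℕ) (w : List Bool) : Prop :=
  ∃ l : List ℕ, (∀ n ∈ l, n ∈ S) ∧ w = (l.map genWord).flatten

/-- The subword `x[i, i+n-1]` of a configuration. -/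
def wordAt {A : Type*} (x : ℤ → A) (i : ℤ) (n : ℕ) : List A :=
  (List.range n).map fun k => x (i + k)

/-- The `S`-gap shift: configurations all of whose finite subwords occur in some
concatenation of the generating words. -/
def SGap (S : Set ℕ) : Set (ℤ → Bool) :=
  {x | ∀ (i : ℤ) (n : ℕ), ∃ w : List Bool, InGenStar S w ∧ (wordAt x i n) <:+: w}

/-- The characteristic sequence of `S` is eventually periodic. -/
def EventuallyPeriodic (S : Set ℕ) : Prop :=
  ∃ p > 0, ∃ N : ℕ, ∀ n ≥ N, (n ∈ S ↔ n + p ∈ S)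

/-- `X_{S,ℓ}`: points whose right tail from `0` is `01^∞`. -/
def SGapLeft (S : Set ℕ) : Set (ℤ → Bool) :=
  {x | x ∈ SGap S ∧ x 0 = false ∧ ∀ i : ℤ, 0 < i → x i = true}

/-- `X_{S,→}`: points whose left tail up to `0` is `^∞10`. -/
def SGapRight (S : Set ℕ) : Set (ℤ → Bool) :=
  {x | x ∈ SGap S ∧ x 0 = false ∧ ∀ i : ℤ, i < 0 → x i = true}

lemma wordAt_eq {A : Type*} (x : ℤ → A) (i : ℤ) (n : ℕ) :
    wordAt x i n = (List.range n).map (fun k : ℕ => x (i + (k:ℤ))) := by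
  unfold wordAt
  induction n with
  | zero => rfl
  | succ n ih => rw [List.range_succ]; simp_all

lemma wordAt_length {A : Type*} (x : ℤ → A) (i : ℤ) (n : ℕ) : (wordAt x i n).length = n := by
  simp [wordAt_eq]

lemma wordAt_add {A : Type*} (x : ℤ → A) (i : ℤ) (p q : ℕ) :
    wordAt x i (p + q) = wordAt x i p ++ wordAt x (i + p) q := by
  simp only [wordAt_eq]
  rw [List.range_add, List.map_append, List.map_map]
  congr 1
  apply List.map_congr_left
  intro k _
  simp only [Function.comp_apply]
  congr 1
  push_cast
  ring

lemma wordAt_replicate {A : Type*} {x : ℤ → A} {i : ℤ} {n : ℕ} {b : A}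
    (h : ∀ j : ℤ, i ≤ j → j < i + n → x j = b) : wordAt x i n = List.replicate n b := by
  rw [List.eq_replicate_iff]
  refine ⟨wordAt_length x i n, ?_⟩
  intro c hc
  simp only [wordAt_eq, List.mem_map, List.mem_range] at hc
  obtain ⟨k, hk, rfl⟩ := hc
  exact h _ (by omega) (by omega)

lemma wordAt_add2 {A : Type*} (x : ℤ → A) (i j : ℤ) (p q : ℕ) (h : j = i + p) :
    wordAt x i (p + q) = wordAt x i p ++ wordAt x j q := by
  rw [wordAt_add, h]

lemma wordAt_infix {A : Type*} (x : ℤ → A) {a b : ℤ} {m M : ℕ}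
    (h1 : b ≤ a) (h2 : a + m ≤ b + M) : wordAt x a m <:+: wordAt x b M := by
  set p := (a - b).toNat with hp
  have hpz : (p : ℤ) = a - b := Int.toNat_of_nonneg (by omega)
  have hq : ∃ q : ℕ, M = p + (m + q) := ⟨M - p - m, by omega⟩
  obtain ⟨q, rfl⟩ := hq
  refine ⟨wordAt x b p, wordAt x (a + m) q, ?_⟩
  rw [wordAt_add2 x b a p (m + q) (by omega), wordAt_add2 x a (a + m) m q rfl,
    List.append_assoc]

lemma wordAt_one {A : Type*} (x : ℤ → A) (i : ℤ) : wordAt x i 1 = [x i] := by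
  rw [wordAt_eq]
  simp [List.range_succ]


-- strip a block of trues from the front
lemma strip_trues : ∀ (n : ℕ) (s u r : List Bool),
    s ++ false :: u = List.replicate n true ++ r → ∃ s', s' ++ false :: u = r := by
  intro n
  induction n with
  | zero => intro s u r h; exact ⟨s, by simpa using h⟩
  | succ n ih =>
    intro s u r h
    rw [List.replicate_succ] at h
    cases s with
    | nil => simp at h
    | cons c s' =>
      simp only [List.cons_append, List.cons.injEq] at h
      exact ih s' u r h.2

-- compare a true-run terminated by false against replicate ++ r with r starting with false
lemma run_eq : ∀ (g n : ℕ) (t r : List Bool), (r = [] ∨ ∃ r', r = false :: r') →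
    List.replicate g true ++ false :: t = List.replicate n true ++ r → g = n := by
  intro g
  induction g with
  | zero =>
    intro n t r hr h
    cases n with
    | zero => rfl
    | succ n => rw [List.replicate_succ] at h; simp at h
  | succ g ih =>
    intro n t r hr h
    cases n with
    | zero =>
      simp only [List.replicate_succ, List.replicate_zero, List.nil_append,
        List.cons_append] at h
      rcases hr with rfl | ⟨r', rfl⟩
      · simp at h
      · simp at h
    | succ n =>
      simp only [List.replicate_succ, List.cons_append, List.cons.injEq] at h
      exact congrArg Nat.succ (ih n t r hr h.2)

lemma join_head (l : List ℕ) :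
    (l.map genWord).flatten = [] ∨ ∃ r', (l.map genWord).flatten = false :: r' := by
  cases l with
  | nil => left; simp
  | cons m l' => right; exact ⟨List.replicate m true ++ (l'.map genWord).flatten, by simp [genWord]⟩

lemma join_gap {S : Set ℕ} {g : ℕ} : ∀ (l : List ℕ), (∀ n ∈ l, n ∈ S) →
    ∀ s t : List Bool,
      s ++ (false :: (List.replicate g true ++ [false])) ++ t = (l.map genWord).flatten →
      g ∈ S := by
  intro l
  induction l with
  | nil =>
    intro _ s t h
    simp at h
  | cons n l' ih =>
    intro hmem s t h
    have hrest := join_head l'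
    simp only [List.map_cons, List.flatten_cons, genWord] at h
    cases s with
    | nil =>
      simp only [List.nil_append, List.cons_append, List.cons.injEq] at h
      have h2 : List.replicate g true ++ false :: ([] ++ t) =
          List.replicate n true ++ (l'.map genWord).flatten := by
        simpa [List.append_assoc] using h.2
      have := run_eq g n _ _ hrest h2
      exact this ▸ hmem n (by simp)
    | cons c s' =>
      simp only [List.cons_append, List.cons.injEq] at h
      have h2 : s' ++ false :: ((List.replicate g true ++ [false]) ++ t) =
          List.replicate n true ++ (l'.map genWord).flatten := by
        simpa [List.append_assoc] using h.2
      obtain ⟨s'', hs''⟩ := strip_trues n s' _ _ h2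
      refine ih (fun m hm => hmem m (by simp [hm])) s'' t ?_
      simpa [List.append_assoc] using hs''


lemma cons_rep_append (a : ℕ) (t : List Bool) :
    false :: (List.replicate a false ++ t) = List.replicate a false ++ false :: t := by
  induction a with
  | zero => simp
  | succ a ih => simp only [List.replicate_succ, List.cons_append, List.cons.injEq, true_and]
                 exact ih

lemma gap_mem {S : Set ℕ} {x : ℤ → Bool} (hx : x ∈ SGap S) {p q : ℤ} (hpq : p < q)
    (hxp : x p = false) (hxq : x q = false)
    (hmid : ∀ i : ℤ, p < i → i < q → x i = true) : (q - p - 1).toNat ∈ S := by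
  set g := (q - p - 1).toNat with hg
  have hgz : (g : ℤ) = q - p - 1 := Int.toNat_of_nonneg (by omega)
  have hword : wordAt x p (1 + (g + 1)) = false :: (List.replicate g true ++ [false]) := by
    rw [wordAt_add2 x p (p+1) 1 (g+1) (by push_cast; ring),
        wordAt_add2 x (p+1) q g 1 (by omega), wordAt_one, wordAt_one, hxp, hxq]
    rw [wordAt_replicate (b := true) (fun j h1 h2 => hmid j (by omega) (by omega))]
    simp
  obtain ⟨w, ⟨l, hl, rfl⟩, hinf⟩ := hx p (1 + (g + 1))
  rw [hword] at hinf
  obtain ⟨s, t, hst⟩ := hinf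
  exact join_gap l hl s t hst

lemma exists_big {S : Set ℕ} (hinf : S.Infinite) (N : ℕ) : ∃ m ∈ S, N ≤ m := by
  by_contra h
  push_neg at h
  exact hinf ((Set.finite_Iio N).subset (fun m hm => h m hm))

lemma join_rep_zero (k : ℕ) :
    ((List.replicate k 0).map genWord).flatten = List.replicate k false := by
  induction k with
  | zero => simp
  | succ k ih => simp [List.replicate_succ, genWord, ih]

-- 1^a is an infix of a genstar word
lemma genstar_ones {S : Set ℕ} (hinf : S.Infinite) (a : ℕ) :
    ∃ w, InGenStar S w ∧ List.replicate a true <:+: w := by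
  obtain ⟨m, hm, hma⟩ := exists_big hinf a
  refine ⟨genWord m, ⟨[m], by simpa using hm, by simp⟩,
    ⟨[false] ++ List.replicate (m - a) true, [], ?_⟩⟩
  have : m - a + a = m := by omega
  simp [genWord, List.append_assoc, ← List.replicate_add, this]

-- 1^a 0^b is an infix of a genstar word
lemma genstar_ones_zeros {S : Set ℕ} (hinf : S.Infinite) (h0 : 0 ∈ S) (a b : ℕ) :
    ∃ w, InGenStar S w ∧ List.replicate a true ++ List.replicate b false <:+: w := by
  obtain ⟨m, hm, hma⟩ := exists_big hinf a
  refine ⟨(((m :: List.replicate b 0).map genWord)).flatten,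
    ⟨m :: List.replicate b 0, ?_, rfl⟩,
    ⟨[false] ++ List.replicate (m - a) true, [], ?_⟩⟩
  · intro n hn
    rcases List.mem_cons.1 hn with rfl | hn
    · exact hm
    · rwa [List.eq_of_mem_replicate hn]
  · have : m - a + a = m := by omega
    simp only [genWord, List.map_cons, List.map_append, List.flatten_cons, List.flatten_append,
      join_rep_zero, List.map_nil, List.flatten_nil, List.append_nil, List.append_assoc,
      List.singleton_append, List.cons_append, List.cons.injEq, true_and, List.nil_append]
    rw [← List.append_assoc, ← List.replicate_add, this]

-- 0^a 1^b is an infix of a genstar word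
lemma genstar_zeros_ones {S : Set ℕ} (hinf : S.Infinite) (h0 : 0 ∈ S) (a b : ℕ) :
    ∃ w, InGenStar S w ∧ List.replicate a false ++ List.replicate b true <:+: w := by
  obtain ⟨m, hm, hmb⟩ := exists_big hinf b
  refine ⟨(((List.replicate a 0 ++ [m]).map genWord)).flatten,
    ⟨List.replicate a 0 ++ [m], ?_, rfl⟩,
    ⟨[false], List.replicate (m - b) true, ?_⟩⟩
  · intro n hn
    rcases List.mem_append.1 hn with hn | hn
    · rwa [List.eq_of_mem_replicate hn]
    · simp only [List.mem_singleton] at hn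
      exact hn ▸ hm
  · have hb : b + (m - b) = m := by omega
    simp only [List.map_append, List.flatten_append, join_rep_zero, List.map_cons,
      List.map_nil, List.flatten_cons, List.flatten_nil, genWord, List.append_nil]
    simp only [List.append_assoc, List.singleton_append, List.cons_append,
      ← List.replicate_add, hb]
    exact cons_rep_append a _
-- 1^(a+1) 0^b 1^c is an infix of a genstar word, b ≥ 1
lemma genstar_mid {S : Set ℕ} (hinf : S.Infinite) (h0 : 0 ∈ S) (a b c : ℕ) (hb : 1 ≤ b) :
    ∃ w, InGenStar S w ∧
      List.replicate a true ++ List.replicate b false ++ List.replicate c true <:+: w := by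
  obtain ⟨m, hm, hma⟩ := exists_big hinf (max a c)
  refine ⟨(((m :: (List.replicate (b-1) 0 ++ [m])).map genWord)).flatten,
    ⟨m :: (List.replicate (b-1) 0 ++ [m]), ?_, rfl⟩,
    ⟨[false] ++ List.replicate (m - a) true, List.replicate (m - c) true, ?_⟩⟩
  · intro n hn
    rcases List.mem_cons.1 hn with rfl | hn
    · exact hm
    · rcases List.mem_append.1 hn with hn | hn
      · rwa [List.eq_of_mem_replicate hn]
      · simp at hn; rwa [hn]
  · simp only [List.map_cons, List.map_append, List.flatten_cons, List.flatten_append,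
      join_rep_zero, List.map_nil, List.flatten_nil, genWord, List.append_nil]
    have h1 : m - a + a = m := by omega
    have h2 : c + (m - c) = m := by omega
    have h3 : List.replicate b false = List.replicate (b-1) false ++ [false] := by
      rw [← List.replicate_succ' (n := b-1) (a := false)]
      congr 1
      omega
    rw [h3]
    simp only [List.append_assoc, List.singleton_append, List.cons_append]
    congr 1
    simp only [List.nil_append]
    rw [← List.replicate_add, h2, ← List.append_assoc, ← List.replicate_add, h1]


lemma shiftMap_eq_pow {A : Type*} (x : ℤ → A) : shiftMap x = shiftPow 1 x := rfl

lemma wordAt_shiftPow {A : Type*} (x : ℤ → A) (k i : ℤ) (n : ℕ) :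
    wordAt (shiftPow k x) i n = wordAt x (i + k) n := by
  simp only [wordAt_eq]
  apply List.map_congr_left
  intro j _
  simp only [shiftPow]
  congr 1
  ring

lemma sgap_shift {S : Set ℕ} {x : ℤ → Bool} (hx : x ∈ SGap S) (k : ℤ) :
    shiftPow k x ∈ SGap S := by
  intro i n
  obtain ⟨w, hw, hin⟩ := hx (i + k) n
  exact ⟨w, hw, (wordAt_shiftPow x k i n) ▸ hin⟩

lemma shiftPow_shiftPow {A : Type*} (a b : ℤ) (x : ℤ → A) :
    shiftPow a (shiftPow b x) = shiftPow (a + b) x := by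
  funext i
  simp only [shiftPow]
  congr 1
  ring

lemma shiftPow_zero' {A : Type*} (x : ℤ → A) : shiftPow 0 x = x := by
  funext i; simp [shiftPow]

-- F commutes with all powers of the shift
lemma commute_pow {S : Set ℕ} {F : (ℤ → Bool) → (ℤ → Bool)}
    (hcomm : ∀ x ∈ SGap S, F (shiftMap x) = shiftMap (F x)) :
    ∀ (k : ℤ), ∀ x ∈ SGap S, F (shiftPow k x) = shiftPow k (F x) := by
  intro k
  induction k using Int.induction_on with
  | zero => intro x hx; rw [shiftPow_zero', shiftPow_zero']
  | succ k ih =>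
    intro x hx
    have h1 : shiftPow ((k:ℤ) + 1) x = shiftMap (shiftPow k x) := by
      rw [shiftMap_eq_pow, shiftPow_shiftPow]
      congr 1
      ring
    rw [h1, hcomm _ (sgap_shift hx k), ih x hx, shiftMap_eq_pow, shiftPow_shiftPow]
    congr 1
    ring
  | pred k ih =>
    intro x hx
    have hy : shiftPow (-(k:ℤ) - 1) x ∈ SGap S := sgap_shift hx _
    have h1 : shiftMap (shiftPow (-(k:ℤ) - 1) x) = shiftPow (-(k:ℤ)) x := by
      rw [shiftMap_eq_pow, shiftPow_shiftPow]
      congr 1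
      ring
    have h2 := hcomm _ hy
    rw [h1, ih x hx] at h2
    have := congrArg (shiftPow (-1)) h2
    rw [shiftPow_shiftPow] at this
    rw [shiftMap_eq_pow, shiftPow_shiftPow] at this
    rw [show (-1 + (-(k:ℤ))) = -(k:ℤ) - 1 by ring] at this
    rw [show (-1 + (1:ℤ)) = 0 by ring, shiftPow_zero'] at this
    exact this.symm


lemma wordAt_congr {A : Type*} {x y : ℤ → A} {i : ℤ} {n : ℕ}
    (h : ∀ k : ℕ, k < n → x (i + k) = y (i + k)) : wordAt x i n = wordAt y i n := by
  simp only [wordAt_eq]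
  apply List.map_congr_left
  intro k hk
  exact h k (List.mem_range.1 hk)

lemma cylinder_open (x : ℤ → Bool) (js : Finset ℤ) :
    IsOpen {y : ℤ → Bool | ∀ j ∈ js, y j = x j} := by
  have : {y : ℤ → Bool | ∀ j ∈ js, y j = x j} = ⋂ j ∈ js, {y : ℤ → Bool | y j = x j} := by
    ext y; simp
  rw [this]
  apply isOpen_biInter_finset
  intro j _
  show IsOpen ((fun y : ℤ → Bool => y j) ⁻¹' ({x j} : Set Bool))
  exact IsOpen.preimage (continuous_apply j) (isOpen_discrete _)

lemma sgap_closed (S : Set ℕ) : IsClosed (SGap S) := by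
  have hrep : SGap S = ⋂ (p : ℤ × ℕ),
      {x : ℤ → Bool | ∃ w, InGenStar S w ∧ wordAt x p.1 p.2 <:+: w} := by
    ext x
    simp only [SGap, Set.mem_setOf_eq, Set.mem_iInter, Prod.forall]
  rw [hrep]
  apply isClosed_iInter
  intro p
  rw [← isOpen_compl_iff]
  rw [isOpen_iff_forall_mem_open]
  intro x hx
  refine ⟨{y : ℤ → Bool | ∀ j ∈ Finset.range p.2, y (p.1 + (j:ℤ)) = x (p.1 + (j:ℤ))}, ?_, ?_, ?_⟩
  · intro y hy hmem
    apply hx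
    obtain ⟨w, hw, hin⟩ := hmem
    refine ⟨w, hw, ?_⟩
    rwa [← wordAt_congr (fun k hk => (hy _ (Finset.mem_range.2 hk)))]
  · have : {y : ℤ → Bool | ∀ j ∈ Finset.range p.2, y (p.1 + (j:ℤ)) = x (p.1 + (j:ℤ))} =
        {y : ℤ → Bool | ∀ j ∈ (Finset.range p.2).image (fun k : ℕ => p.1 + (k:ℤ)), y j = x j} := by
      ext y
      constructor
      · intro h j hj
        simp only [Finset.mem_image, Finset.mem_range] at hj
        obtain ⟨k, hk, rfl⟩ := hj
        exact h k (Finset.mem_range.2 hk)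
      · intro h k hk
        exact h _ (Finset.mem_image.2 ⟨k, hk, rfl⟩)
    rw [this]
    exact cylinder_open x _
  · intro j _
    rfl

lemma exists_radius {S : Set ℕ} (F : (ℤ → Bool) → (ℤ → Bool))
    (hc : ContinuousOn F (SGap S)) :
    ∃ r : ℕ, ∀ x ∈ SGap S, ∀ y ∈ SGap S,
      (∀ j : ℤ, |j| ≤ (r:ℤ) → x j = y j) → F x 0 = F y 0 := by
  set X := SGap S with hX
  set e : (ℤ → Bool) → Bool := fun z => F z 0 with he
  have hec : ContinuousOn e X := (continuous_apply (0:ℤ)).comp_continuousOn hc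
  have key : ∀ x : (ℤ → Bool), ∃ m : ℕ, x ∈ X →
      ∀ y ∈ X, (∀ j : ℤ, |j| ≤ (m:ℤ) → y j = x j) → e y = e x := by
    intro x
    by_cases hx : x ∈ X
    · have hcx : ContinuousWithinAt e X x := hec x hx
      have hmem : e ⁻¹' {e x} ∈ nhdsWithin x X :=
        hcx ((isOpen_discrete {e x}).mem_nhds rfl)
      rw [mem_nhdsWithin] at hmem
      obtain ⟨V, hVo, hxV, hVsub⟩ := hmem
      obtain ⟨I, u, hIu, hpi⟩ := (isOpen_pi_iff.1 hVo) x hxV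
      refine ⟨I.sup (fun i => i.natAbs), fun _ y hy hagree => ?_⟩
      have hyV : y ∈ V := by
        apply hpi
        intro i hi
        have h0 : i.natAbs ≤ I.sup (fun i => i.natAbs) := Finset.le_sup hi
        have h1 : (i.natAbs : ℤ) ≤ ((I.sup (fun i => i.natAbs) : ℕ) : ℤ) :=
          Int.ofNat_le.2 h0
        have h2 : y i = x i := hagree i (by rw [Int.abs_eq_natAbs]; exact h1)
        rw [h2]
        exact (hIu i hi).2
      have : y ∈ e ⁻¹' {e x} := hVsub ⟨hyV, hy⟩
      exact this
    · exact ⟨0, fun h => absurd h hx⟩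
  choose M hM using key
  have hXcpt : IsCompact X := (sgap_closed S).isCompact
  have hcover : X ⊆ ⋃ z : X, {y : ℤ → Bool | ∀ j : ℤ, |j| ≤ (M z.1 : ℤ) → y j = z.1 j} := by
    intro x hx
    exact Set.mem_iUnion.2 ⟨⟨x, hx⟩, fun j _ => rfl⟩
  have hopen : ∀ z : X, IsOpen {y : ℤ → Bool | ∀ j : ℤ, |j| ≤ (M z.1 : ℤ) → y j = z.1 j} := by
    intro z
    have : {y : ℤ → Bool | ∀ j : ℤ, |j| ≤ (M z.1 : ℤ) → y j = z.1 j} =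
        {y : ℤ → Bool | ∀ j ∈ Finset.Icc (-(M z.1 : ℤ)) (M z.1 : ℤ), y j = z.1 j} := by
      ext y
      simp only [Set.mem_setOf_eq, Finset.mem_Icc]
      constructor
      · intro h j hj; exact h j (abs_le.2 hj)
      · intro h j hj; exact h j (abs_le.1 hj)
    rw [this]
    exact cylinder_open z.1 _
  obtain ⟨t, ht⟩ := hXcpt.elim_finite_subcover _ hopen hcover
  refine ⟨t.sup (fun z => M z.1), ?_⟩
  intro x hx y hy hagree
  obtain ⟨z, hzt, hxz⟩ := Set.mem_iUnion₂.1 (ht hx)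
  have hMr0 : M z.1 ≤ t.sup (fun z => M z.1) := Finset.le_sup (f := fun z => M z.1) hzt
  have hMr : ((M z.1 : ℕ) : ℤ) ≤ ((t.sup (fun z => M z.1) : ℕ) : ℤ) := Int.ofNat_le.2 hMr0
  have h1 : e x = e z.1 := hM z.1 z.2 x hx (fun j hj => hxz j hj)
  have h2 : e y = e z.1 := by
    apply hM z.1 z.2 y hy
    intro j hj
    rw [← hagree j (le_trans hj hMr)]
    exact hxz j hj
  exact h1.trans h2.symm


def ptOne : ℤ → Bool := fun _ => true
def ptZero : ℤ → Bool := fun _ => false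
def ptUL : ℤ → Bool := fun i => decide (i ≤ 0)
def ptUR : ℤ → Bool := fun i => decide (1 ≤ i)
def ptW (n : ℕ) : ℤ → Bool := fun i => !(decide (1 ≤ i ∧ i ≤ (n:ℤ)))

lemma ptOne_mem {S : Set ℕ} (hinf : S.Infinite) : ptOne ∈ SGap S := by
  intro i len
  obtain ⟨w, hw, hin⟩ := genstar_ones hinf (S := S) len
  exact ⟨w, hw, (wordAt_replicate (b := true) (fun j _ _ => rfl)) ▸ hin⟩

lemma ptUL_mem {S : Set ℕ} (hinf : S.Infinite) (h0 : 0 ∈ S) : ptUL ∈ SGap S := by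
  intro i len
  by_cases h1 : i + len ≤ 1
  · obtain ⟨w, hw, hin⟩ := genstar_ones hinf (S := S) len
    refine ⟨w, hw, (wordAt_replicate (b := true) (fun j hj1 hj2 => ?_)) ▸ hin⟩
    simp only [ptUL, decide_eq_true_eq]
    omega
  · by_cases h2 : 1 ≤ i
    · obtain ⟨w, hw, hin⟩ := genstar_ones_zeros hinf h0 (S := S) 0 len
      refine ⟨w, hw, (wordAt_replicate (b := false) (fun j hj1 hj2 => ?_)) ▸ (by simpa using hin)⟩
      simp only [ptUL, decide_eq_false_iff_not]
      omega
    · obtain ⟨w, hw, hin⟩ := genstar_ones_zeros hinf h0 (S := S) len len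
      have hsplit : wordAt ptUL (1 - (len:ℤ)) (len + len) =
          List.replicate len true ++ List.replicate len false := by
        rw [wordAt_add2 ptUL (1 - (len:ℤ)) 1 len len (by push_cast; ring)]
        rw [wordAt_replicate (b := true) (fun j hj1 hj2 => by
          simp only [ptUL, decide_eq_true_eq]; omega)]
        rw [wordAt_replicate (b := false) (fun j hj1 hj2 => by
          simp only [ptUL, decide_eq_false_iff_not]; omega)]
      exact ⟨w, hw, (wordAt_infix ptUL (by omega) (by push_cast; omega)).trans
        (hsplit ▸ hin)⟩

lemma ptUR_mem {S : Set ℕ} (hinf : S.Infinite) (h0 : 0 ∈ S) : ptUR ∈ SGap S := by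
  intro i len
  by_cases h1 : 1 ≤ i
  · obtain ⟨w, hw, hin⟩ := genstar_ones hinf (S := S) len
    refine ⟨w, hw, (wordAt_replicate (b := true) (fun j hj1 hj2 => ?_)) ▸ hin⟩
    simp only [ptUR, decide_eq_true_eq]
    omega
  · by_cases h2 : i + len ≤ 1
    · obtain ⟨w, hw, hin⟩ := genstar_zeros_ones hinf h0 (S := S) len 0
      refine ⟨w, hw, (wordAt_replicate (b := false) (fun j hj1 hj2 => ?_)) ▸ (by simpa using hin)⟩
      simp only [ptUR, decide_eq_false_iff_not]
      omega
    · obtain ⟨w, hw, hin⟩ := genstar_zeros_ones hinf h0 (S := S) len len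
      have hsplit : wordAt ptUR (1 - (len:ℤ)) (len + len) =
          List.replicate len false ++ List.replicate len true := by
        rw [wordAt_add2 ptUR (1 - (len:ℤ)) 1 len len (by push_cast; ring)]
        rw [wordAt_replicate (b := false) (fun j hj1 hj2 => by
          simp only [ptUR, decide_eq_false_iff_not]; omega)]
        rw [wordAt_replicate (b := true) (fun j hj1 hj2 => by
          simp only [ptUR, decide_eq_true_eq]; omega)]
      exact ⟨w, hw, (wordAt_infix ptUR (by omega) (by push_cast; omega)).trans
        (hsplit ▸ hin)⟩

lemma ptW_mem {S : Set ℕ} (hinf : S.Infinite) (h0 : 0 ∈ S) {n : ℕ} (hn : 1 ≤ n) :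
    ptW n ∈ SGap S := by
  intro i len
  by_cases h1 : i + len ≤ 1
  · obtain ⟨w, hw, hin⟩ := genstar_ones hinf (S := S) len
    refine ⟨w, hw, (wordAt_replicate (b := true) (fun j hj1 hj2 => ?_)) ▸ hin⟩
    simp only [ptW, Bool.not_eq_true', decide_eq_false_iff_not, not_and]
    omega
  · by_cases h2 : (n:ℤ) + 1 ≤ i
    · obtain ⟨w, hw, hin⟩ := genstar_ones hinf (S := S) len
      refine ⟨w, hw, (wordAt_replicate (b := true) (fun j hj1 hj2 => ?_)) ▸ hin⟩
      simp only [ptW, Bool.not_eq_true', decide_eq_false_iff_not, not_and]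
      omega
    · obtain ⟨w, hw, hin⟩ := genstar_mid hinf h0 (len+1) n len hn
      have hsplit : wordAt (ptW n) (-(len:ℤ)) ((len + 1) + (n + len)) =
          List.replicate (len+1) true ++ (List.replicate n false ++ List.replicate len true) := by
        rw [wordAt_add2 (ptW n) (-(len:ℤ)) 1 (len+1) (n+len) (by push_cast; ring)]
        rw [wordAt_add2 (ptW n) 1 ((n:ℤ)+1) n len (by push_cast; ring)]
        rw [wordAt_replicate (b := true) (fun j hj1 hj2 => by
          simp only [ptW, Bool.not_eq_true', decide_eq_false_iff_not, not_and]; push_cast at hj2; omega)]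
        rw [wordAt_replicate (b := false) (fun j hj1 hj2 => by
          simp only [ptW, Bool.not_eq_false', decide_eq_true_eq]; omega)]
        rw [wordAt_replicate (b := true) (fun j hj1 hj2 => by
          simp only [ptW, Bool.not_eq_true', decide_eq_false_iff_not, not_and]; omega)]
      have hin' : List.replicate (len+1) true ++
          (List.replicate n false ++ List.replicate len true) <:+: w := by
        rwa [List.append_assoc] at hin
      exact ⟨w, hw, (wordAt_infix (ptW n) (by omega) (by push_cast; omega)).trans
        (hsplit ▸ hin')⟩


/-- If the `S`-gap shift `X_S` is not sofic (i.e. `S` is infinite and its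
characteristic sequence is not eventually periodic), then every automorphism of `X_S` fixes
the point `1^ℤ`. -/
theorem stmt11 (S : Set ℕ) (hS : S.Nonempty) (hinf : S.Infinite)
    (hnp : ¬ EventuallyPeriodic S)
    (F : (ℤ → Bool) → (ℤ → Bool)) (hF : IsAutomorphism (SGap S) F) :
    F (fun _ => true) = fun _ => true := by
  obtain ⟨hmaps, hcont, hcomm, G, hGmaps, hGcont, hGcomm, hGF, hFG⟩ := hF
  have h1X : ptOne ∈ SGap S := ptOne_mem hinf
  -- F ptOne is constant
  have hfix1 : shiftMap (F ptOne) = F ptOne := by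
    rw [← hcomm ptOne h1X]; rfl
  have hstep1 : ∀ i : ℤ, F ptOne (i + 1) = F ptOne i := fun i => congrFun hfix1 i
  have hconst1 : ∀ i : ℤ, F ptOne i = F ptOne 0 := by
    intro i
    induction i using Int.induction_on with
    | zero => rfl
    | succ k ih => rw [hstep1 k, ih]
    | pred k ih => rw [← ih, ← hstep1 (-(k:ℤ) - 1)]; norm_num
  cases hcase : F ptOne 0 with
  | true =>
    show F ptOne = ptOne
    funext i
    rw [hconst1 i, hcase]; rfl
  | false =>
    exfalso
    have hFone : F ptOne = ptZero := funext fun i => (hconst1 i).trans hcase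
    have h0X : ptZero ∈ SGap S := hFone ▸ hmaps h1X
    have h0S : 0 ∈ S := by
      have := gap_mem h0X (p := 0) (q := 1) (by omega) rfl rfl
        (fun i h1 h2 => absurd h2 (by omega))
      simpa using this
    -- F ptZero = ptOne
    have hfix0 : shiftMap (F ptZero) = F ptZero := by
      rw [← hcomm ptZero h0X]; rfl
    have hstep0 : ∀ i : ℤ, F ptZero (i + 1) = F ptZero i := fun i => congrFun hfix0 i
    have hconst0 : ∀ i : ℤ, F ptZero i = F ptZero 0 := by
      intro i
      induction i using Int.induction_on with
      | zero => rfl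
      | succ k ih => rw [hstep0 k, ih]
      | pred k ih => rw [← ih, ← hstep0 (-(k:ℤ) - 1)]; norm_num
    have h0true : F ptZero 0 = true := by
      by_contra hft
      have hft' : F ptZero 0 = false := by
        cases hb : F ptZero 0
        · rfl
        · exact absurd hb hft
      have hFz : F ptZero = F ptOne := by
        funext i
        rw [hconst0 i, hft', hFone]; rfl
      have e1 : G (F ptZero) = ptZero := hGF ptZero h0X
      rw [hFz, hGF ptOne h1X] at e1
      have := congrFun e1 0
      simp [ptOne, ptZero] at this
    have hFzero : F ptZero = ptOne := funext fun i => (hconst0 i).trans h0true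
    obtain ⟨r, hr⟩ := exists_radius F hcont
    have hFpow := commute_pow hcomm
    have hFat : ∀ x ∈ SGap S, ∀ i : ℤ, F x i = F (shiftPow i x) 0 := by
      intro x hx i
      rw [hFpow i x hx]
      show F x i = F x (0 + i)
      norm_num
    have hEval : ∀ (x y : ℤ → Bool), x ∈ SGap S → y ∈ SGap S → ∀ i k : ℤ,
        (∀ j : ℤ, |j| ≤ (r:ℤ) → x (j + i) = y (j + k)) → F x i = F y k := by
      intro x y hx hy i k hagree
      rw [hFat x hx i, hFat y hy k]
      exact hr _ (sgap_shift hx i) _ (sgap_shift hy k) (fun j hj => hagree j hj)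
    have hULX : ptUL ∈ SGap S := ptUL_mem hinf h0S
    have hURX : ptUR ∈ SGap S := ptUR_mem hinf h0S
    -- boundary falses
    have hULr : F ptUL (-(r:ℤ)) = false := by
      rw [← hcase]
      apply hEval ptUL ptOne hULX h1X
      intro j hj
      have hj' := abs_le.1 hj
      show decide ((j + -(r:ℤ)) ≤ 0) = true
      simp only [decide_eq_true_eq]
      omega
    have hURr : F ptUR ((r:ℤ) + 1) = false := by
      rw [← hcase]
      apply hEval ptUR ptOne hURX h1X
      intro j hj
      have hj' := abs_le.1 hj
      show decide (1 ≤ j + ((r:ℤ) + 1)) = true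
      simp only [decide_eq_true_eq]
      omega
    -- extremal positions
    set Tl := (Finset.Icc (-(r:ℤ)) r).filter (fun i => F ptUL i = false) with hTl
    have hTlne : Tl.Nonempty := ⟨-(r:ℤ), Finset.mem_filter.2
      ⟨Finset.mem_Icc.2 ⟨le_refl _, by omega⟩, hULr⟩⟩
    set p0 := Tl.max' hTlne with hp0def
    obtain ⟨hp0I, hp0f⟩ := Finset.mem_filter.1 (Tl.max'_mem hTlne)
    obtain ⟨hp0l, hp0r⟩ := Finset.mem_Icc.1 hp0I
    have hmaxl : ∀ i : ℤ, p0 < i → i ≤ (r:ℤ) → F ptUL i = true := by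
      intro i hi1 hi2
      cases hbi : F ptUL i with
      | true => rfl
      | false =>
        exfalso
        have hmem : i ∈ Tl := Finset.mem_filter.2
          ⟨Finset.mem_Icc.2 ⟨by omega, hi2⟩, hbi⟩
        have := Finset.le_max' Tl i hmem
        omega
    set Tr := (Finset.Icc (-(r:ℤ)) ((r:ℤ)+1)).filter (fun k => F ptUR k = false) with hTr
    have hTrne : Tr.Nonempty := ⟨(r:ℤ)+1, Finset.mem_filter.2
      ⟨Finset.mem_Icc.2 ⟨by omega, le_refl _⟩, hURr⟩⟩
    set q0 := Tr.min' hTrne with hq0def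
    obtain ⟨hq0I, hq0f⟩ := Finset.mem_filter.1 (Tr.min'_mem hTrne)
    obtain ⟨hq0l, hq0r⟩ := Finset.mem_Icc.1 hq0I
    have hminr : ∀ k : ℤ, -(r:ℤ) ≤ k → k < q0 → F ptUR k = true := by
      intro k hk1 hk2
      cases hbk : F ptUR k with
      | true => rfl
      | false =>
        exfalso
        have hmem : k ∈ Tr := Finset.mem_filter.2
          ⟨Finset.mem_Icc.2 ⟨hk1, by omega⟩, hbk⟩
        have := Finset.min'_le Tr k hmem
        omega
    -- the main family of gaps
    have hbig : ∀ n : ℕ, 2*r+2 ≤ n → (((n:ℤ) + q0) - p0 - 1).toNat ∈ S := by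
      intro n hn
      have hwX : ptW n ∈ SGap S := ptW_mem hinf h0S (by omega)
      have hyX : F (ptW n) ∈ SGap S := hmaps hwX
      -- middle is true
      have hmidval : ∀ i : ℤ, (r:ℤ) + 1 ≤ i → i ≤ (n:ℤ) - r → F (ptW n) i = true := by
        intro i hi1 hi2
        rw [← h0true]
        apply hEval (ptW n) ptZero hwX h0X
        intro j hj
        have hj' := abs_le.1 hj
        show (!(decide (1 ≤ j + i ∧ j + i ≤ (n:ℤ)))) = false
        simp only [Bool.not_eq_false', decide_eq_true_eq]
        omega
      -- left window matches ptUL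
      have hleft : ∀ k : ℤ, |k| ≤ (r:ℤ) → F (ptW n) k = F ptUL k := by
        intro k hk
        have hk' := abs_le.1 hk
        apply hEval (ptW n) ptUL hwX hULX
        intro j hj
        have hj' := abs_le.1 hj
        show (!(decide (1 ≤ j + k ∧ j + k ≤ (n:ℤ)))) = decide ((j + k) ≤ 0)
        by_cases hz : j + k ≤ 0
        · have h1 : ¬ (1 ≤ j + k ∧ j + k ≤ (n:ℤ)) := by omega
          simp [hz, h1]
        · have h1 : (1 ≤ j + k ∧ j + k ≤ (n:ℤ)) := by omega
          simp [hz, h1]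
      -- right window matches ptUR
      have hright : ∀ k : ℤ, -(r:ℤ) ≤ k → k ≤ (r:ℤ) + 1 → F (ptW n) ((n:ℤ) + k) = F ptUR k := by
        intro k hk1 hk2
        apply hEval (ptW n) ptUR hwX hURX
        intro j hj
        have hj' := abs_le.1 hj
        show (!(decide (1 ≤ j + ((n:ℤ) + k) ∧ j + ((n:ℤ) + k) ≤ (n:ℤ)))) =
          decide (1 ≤ j + k)
        by_cases hz : 1 ≤ j + k
        · have h1 : ¬ (1 ≤ j + ((n:ℤ) + k) ∧ j + ((n:ℤ) + k) ≤ (n:ℤ)) := by omega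
          simp [hz, h1]
        · have h1 : (1 ≤ j + ((n:ℤ) + k) ∧ j + ((n:ℤ) + k) ≤ (n:ℤ)) := by omega
          simp [hz, h1]
      have hyp : F (ptW n) p0 = false := by
        rw [hleft p0 (abs_le.2 ⟨hp0l, hp0r⟩)]
        exact hp0f
      have hyq : F (ptW n) ((n:ℤ) + q0) = false := by
        rw [hright q0 hq0l hq0r]
        exact hq0f
      have hmid : ∀ i : ℤ, p0 < i → i < (n:ℤ) + q0 → F (ptW n) i = true := by
        intro i hi1 hi2
        by_cases hc1 : i ≤ (r:ℤ)
        · rw [hleft i (abs_le.2 ⟨by omega, hc1⟩)]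
          exact hmaxl i hi1 hc1
        · by_cases hc2 : i ≤ (n:ℤ) - r
          · exact hmidval i (by omega) hc2
          · have heq : i = (n:ℤ) + (i - n) := by ring
            rw [heq, hright (i - n) (by omega) (by omega)]
            exact hminr (i - n) (by omega) (by omega)
      exact gap_mem hyX (by omega) hyp hyq hmid
    -- S contains all large numbers, contradicting non-eventual-periodicity
    have hcof : ∀ m : ℕ, 4*r + 4 ≤ m → m ∈ S := by
      intro m hm
      set n0 := ((m:ℤ) - q0 + p0 + 1).toNat with hn0
      have hn0z : (n0:ℤ) = (m:ℤ) - q0 + p0 + 1 := Int.toNat_of_nonneg (by omega)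
      have hn0ge : 2*r + 2 ≤ n0 := by omega
      have := hbig n0 hn0ge
      have heq : (((n0:ℤ) + q0) - p0 - 1).toNat = m := by omega
      rwa [heq] at this
    apply hnp
    refine ⟨1, one_pos, 4*r + 4, fun m hm => ?_⟩
    exact ⟨fun _ => hcof (m+1) (by omega), fun _ => hcof m hm⟩
end
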